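/- Consider the Hilbert projective metric on an open convex cone C ⊂ ℝ^d containing no full line in its closure. If C' ⊆ C is an open subcone whose diameter with respect to dist_C is at most M < ∞, then there exists δ = δ(M) < 1 such that for all x, y ∈ C', dist_C(x,y) ≤ δ · dist_{C'}(x,y): the inclusion C' ↪ C is a uniform contraction of the respective Hilbert metrics. -/

import Mathlib

/-- `C` is a cone: stable under multiplication by positive scalars. -/
def IsCone {n : ℕ} (C : Set (Fin n → ℝ)) : Prop :=
  ∀ x ∈ C, ∀ t : ℝ, 0 < t → t • x ∈ C

/-- `M_C(x,y) = inf {t > 0 : t•x − y ∈ C̄}`, the gauge entering the Hilbert metric. -/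
noncomputable def gaugeM {n : ℕ} (C : Set (Fin n → ℝ)) (x y : Fin n → ℝ) : ℝ :=
  sInf {t : ℝ | 0 < t ∧ t • x - y ∈ closure C}

/-- The Hilbert projective pseudo-metric of the open convex cone `C`:
`dist_C(x,y) = log (M_C(x,y) · M_C(y,x))`. -/
noncomputable def coneDist {n : ℕ} (C : Set (Fin n → ℝ)) (x y : Fin n → ℝ) : ℝ :=
  Real.log (gaugeM C x y * gaugeM C y x)

open Set Filter Topology

namespace HilbertAux

variable {n : ℕ} {C : Set (Fin n → ℝ)}

lemma cone_add_mem (hconv : Convex ℝ C) (hC : IsCone C) {a b : Fin n → ℝ}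
    (ha : a ∈ C) (hb : b ∈ C) : a + b ∈ C := by
  have h := hconv ha hb (by norm_num : (0:ℝ) ≤ 1/2) (by norm_num : (0:ℝ) ≤ 1/2) (by norm_num)
  have h2 := hC _ h 2 (by norm_num)
  convert h2 using 1
  module

lemma closure_smul_mem (hC : IsCone C) {z : Fin n → ℝ} (hz : z ∈ closure C)
    {t : ℝ} (ht : 0 < t) : t • z ∈ closure C :=
  map_mem_closure (continuous_const_smul t) hz fun w hw => hC w hw t ht

lemma closure_add_mem (hconv : Convex ℝ C) (hC : IsCone C) {a b : Fin n → ℝ}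
    (ha : a ∈ closure C) (hb : b ∈ closure C) : a + b ∈ closure C := by
  have h := hconv.closure ha hb (by norm_num : (0:ℝ) ≤ 1/2) (by norm_num : (0:ℝ) ≤ 1/2) (by norm_num)
  have h2 := closure_smul_mem hC h (t := 2) (by norm_num)
  convert h2 using 1
  module

lemma add_mem_of_closure (hO : IsOpen C) (hconv : Convex ℝ C) (hC : IsCone C)
    {a b : Fin n → ℝ} (ha : a ∈ closure C) (hb : b ∈ C) : a + b ∈ C := by
  obtain ⟨r, hr, hball⟩ := Metric.isOpen_iff.mp hO b hb
  obtain ⟨a', ha', hd⟩ := Metric.mem_closure_iff.mp ha r hr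
  have hc : b + (a - a') ∈ C := by
    apply hball
    rw [Metric.mem_ball]
    have h1 : b + (a - a') - b = a - a' := by abel
    rw [dist_eq_norm, h1, ← dist_eq_norm]
    exact hd
  have h2 := cone_add_mem hconv hC ha' hc
  convert h2 using 1
  abel

lemma gauge_le (x y : Fin n → ℝ) {t : ℝ} (ht : 0 < t) (hmem : t • x - y ∈ closure C) :
    gaugeM C x y ≤ t :=
  csInf_le ⟨0, fun _ hs => hs.1.le⟩ ⟨ht, hmem⟩

lemma gauge_spec (hO : IsOpen C) (hC : IsCone C)
    (hpoint : ∀ z : Fin n → ℝ, z ≠ 0 → z ∈ closure C → -z ∈ closure C → False)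
    {x y : Fin n → ℝ} (hx : x ∈ C) (hy : y ∈ C) (hy0 : y ≠ 0) :
    0 < gaugeM C x y ∧ gaugeM C x y • x - y ∈ closure C := by
  set T : Set ℝ := {t : ℝ | 0 ≤ t ∧ t • x - y ∈ closure C} with hT
  have hTclosed : IsClosed T := by
    have h : T = Set.Ici 0 ∩ (fun t : ℝ => t • x - y) ⁻¹' closure C := by
      ext t; simp [hT, Set.mem_Ici]
    rw [h]
    exact isClosed_Ici.inter (isClosed_closure.preimage (by continuity))
  have hTne : T.Nonempty := by
    obtain ⟨r, hr, hball⟩ := Metric.isOpen_iff.mp hO x hx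
    set t : ℝ := ‖y‖ / r + 1 with ht
    have ht0 : 0 < t := by positivity
    refine ⟨t, ht0.le, subset_closure ?_⟩
    have hmem : x - t⁻¹ • y ∈ C := by
      apply hball
      rw [Metric.mem_ball, dist_eq_norm]
      have h1 : x - t⁻¹ • y - x = -(t⁻¹ • y) := by abel
      rw [h1, norm_neg, norm_smul, Real.norm_eq_abs, abs_of_pos (by positivity)]
      rw [inv_mul_lt_iff₀ ht0]
      have h2 : t * r = ‖y‖ + r := by rw [ht]; field_simp
      rw [h2]; linarith
    have h3 := hC _ hmem t ht0
    have h4 : t • (x - t⁻¹ • y) = t • x - y := by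
      rw [smul_sub, smul_inv_smul₀ ht0.ne']
    rwa [h4] at h3
  have hTbdd : BddBelow T := ⟨0, fun t ht => ht.1⟩
  have hmemT : sInf T ∈ T := hTclosed.csInf_mem hTne hTbdd
  have hpos : 0 < sInf T := by
    rcases hmemT.1.lt_or_eq with h | h
    · exact h
    · exfalso
      have h0 : (0:ℝ) • x - y ∈ closure C := by rw [h]; exact hmemT.2
      rw [zero_smul, zero_sub] at h0
      exact hpoint y hy0 (subset_closure hy) h0
  have hEq : {t : ℝ | 0 < t ∧ t • x - y ∈ closure C} = T := by
    ext t
    constructor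
    · rintro ⟨h1, h2⟩; exact ⟨h1.le, h2⟩
    · rintro ⟨h1, h2⟩; exact ⟨lt_of_lt_of_le hpos (csInf_le hTbdd ⟨h1, h2⟩), h2⟩
  rw [gaugeM, hEq]
  exact ⟨hpos, hmemT.2⟩

lemma one_le_gauge_mul (hO : IsOpen C) (hconv : Convex ℝ C) (hC : IsCone C)
    (hpoint : ∀ z : Fin n → ℝ, z ≠ 0 → z ∈ closure C → -z ∈ closure C → False)
    {x y : Fin n → ℝ} (hx : x ∈ C) (hy : y ∈ C) (hx0 : x ≠ 0) (hy0 : y ≠ 0) :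
    1 ≤ gaugeM C x y * gaugeM C y x := by
  obtain ⟨hb, hbm⟩ := gauge_spec hO hC hpoint hx hy hy0
  obtain ⟨hc, hcm⟩ := gauge_spec hO hC hpoint hy hx hx0
  set b := gaugeM C x y
  set c := gaugeM C y x
  by_contra h
  push_neg at h
  have h1 : c • (b • x - y) ∈ closure C := closure_smul_mem hC hbm hc
  have h2 : c • (b • x - y) + (c • y - x) ∈ closure C := closure_add_mem hconv hC h1 hcm
  have h3 : c • (b • x - y) + (c • y - x) = -((1 - b * c) • x) := by module
  rw [h3] at h2
  have h4 : (1 - b * c) • x ∈ closure C :=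
    closure_smul_mem hC (subset_closure hx) (by linarith)
  have h5 : (1 - b * c) • x ≠ 0 := smul_ne_zero (by intro h'; linarith [h'.ge]; ) hx0
  exact hpoint _ h5 h4 h2

end HilbertAux


open Set Filter Topology

namespace HilbertAux

lemma key_ineq (E m m' : ℝ) (hE : 1 ≤ E) (hm : 0 < m) (hm' : 0 < m') (hP : m * m' ≤ E ^ 2) :
    ∀ u : ℝ, 0 < u → u * (m * m' - 1) ≤ (E - 1) / (E + 1) * ((m * u + 1) * (m' + u)) := by
  intro u hu
  set r := Real.sqrt (m * m') with hr
  have hr0 : 0 ≤ r := Real.sqrt_nonneg _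
  have hr2 : r ^ 2 = m * m' := Real.sq_sqrt (by positivity)
  have hrE : r ≤ E := by
    have h := Real.sqrt_le_sqrt hP
    rwa [Real.sqrt_sq (by linarith)] at h
  have hδ0 : (0:ℝ) ≤ (E - 1) / (E + 1) := by
    apply div_nonneg <;> linarith
  have hrs : r = Real.sqrt m * Real.sqrt m' := Real.sqrt_mul hm.le m'
  have hkeyAM : 2 * u * r ≤ m * u ^ 2 + m' := by
    have hsq : 0 ≤ (Real.sqrt m * u - Real.sqrt m') ^ 2 := sq_nonneg _
    have e : (Real.sqrt m * u - Real.sqrt m') ^ 2 = m * u ^ 2 - 2 * u * r + m' := by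
      rw [hrs]
      have h1 : Real.sqrt m ^ 2 = m := Real.sq_sqrt hm.le
      have h2 : Real.sqrt m' ^ 2 = m' := Real.sq_sqrt hm'.le
      linear_combination u ^ 2 * h1 + h2
    rw [e] at hsq
    linarith
  have hAM : u * (r + 1) ^ 2 ≤ (m * u + 1) * (m' + u) := by
    have hur2 : u * r ^ 2 = u * (m * m') := by rw [hr2]
    nlinarith [hkeyAM, hur2]
  have hstep : u * (r ^ 2 - 1) ≤ (E - 1) / (E + 1) * (u * (r + 1) ^ 2) := by
    rcases le_or_gt r 1 with h | h
    · have h1 : u * (r ^ 2 - 1) ≤ 0 := by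
        nlinarith [mul_nonneg hu.le (by nlinarith : (0:ℝ) ≤ 1 - r ^ 2)]
      have h2 : 0 ≤ (E - 1) / (E + 1) * (u * (r + 1) ^ 2) := by positivity
      linarith
    · rw [div_mul_eq_mul_div, le_div_iff₀ (by linarith)]
      nlinarith [mul_nonneg hu.le (mul_nonneg (by linarith : (0:ℝ) ≤ r + 1)
        (by linarith : (0:ℝ) ≤ 2 * (E - r)))]
  calc u * (m * m' - 1) = u * (r ^ 2 - 1) := by rw [hr2]
    _ ≤ (E - 1) / (E + 1) * (u * (r + 1) ^ 2) := hstep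
    _ ≤ (E - 1) / (E + 1) * ((m * u + 1) * (m' + u)) := mul_le_mul_of_nonneg_left hAM hδ0

lemma core_log_ineq (δ m m' s : ℝ) (hm : 0 < m) (hm' : 0 < m') (hδ : 0 ≤ δ) (hs : 1 ≤ s)
    (hkey : ∀ u : ℝ, 0 < u → u * (m * m' - 1) ≤ δ * ((m * u + 1) * (m' + u))) :
    Real.log (m * s + 1) + Real.log (m' + 1) - Real.log (m + 1) - Real.log (m' + s)
      ≤ δ * Real.log s := by
  set F : ℝ → ℝ := fun u => δ * Real.log u - Real.log (m * u + 1) + Real.log (m' + u) with hF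
  have hder : ∀ u : ℝ, 0 < u →
      HasDerivAt F (δ * u⁻¹ - m / (m * u + 1) + 1 / (m' + u)) u := by
    intro u hu
    have hd1 : HasDerivAt (fun u : ℝ => δ * Real.log u) (δ * u⁻¹) u :=
      (Real.hasDerivAt_log hu.ne').const_mul δ
    have hd2 : HasDerivAt (fun u : ℝ => Real.log (m * u + 1)) (m / (m * u + 1)) u := by
      have h : HasDerivAt (fun u : ℝ => m * u + 1) m u := by
        simpa using ((hasDerivAt_id u).const_mul m).add_const 1
      simpa using h.log (by positivity)
    have hd3 : HasDerivAt (fun u : ℝ => Real.log (m' + u)) (1 / (m' + u)) u := by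
      have h : HasDerivAt (fun u : ℝ => m' + u) 1 u := by
        simpa using (hasDerivAt_id u).const_add m'
      simpa using h.log (by positivity)
    exact (hd1.sub hd2).add hd3
  have hmono : MonotoneOn F (Set.Ici (1:ℝ)) := by
    apply monotoneOn_of_deriv_nonneg (convex_Ici 1)
    · intro u hu
      have hu0 : (0:ℝ) < u := lt_of_lt_of_le one_pos hu
      exact ((hder u hu0).continuousAt).continuousWithinAt
    · intro u hu
      rw [interior_Ici] at hu
      have hu0 : (0:ℝ) < u := lt_trans one_pos hu
      exact ((hder u hu0).differentiableAt).differentiableWithinAt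
    · intro u hu
      rw [interior_Ici] at hu
      have hu0 : (0:ℝ) < u := lt_trans one_pos hu
      rw [(hder u hu0).deriv]
      have hk := hkey u hu0
      have hden1 : (0:ℝ) < m * u + 1 := by positivity
      have hden2 : (0:ℝ) < m' + u := by positivity
      have e1 : δ * u⁻¹ - m / (m * u + 1) + 1 / (m' + u)
          = (δ * ((m * u + 1) * (m' + u)) - u * (m * m' - 1)) / (u * ((m * u + 1) * (m' + u))) := by
        field_simp
        ring
      rw [e1]
      apply div_nonneg (by linarith) (by positivity)
  have h1 : F 1 ≤ F s := hmono (by simp) (by simpa using hs) hs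
  have hF1 : F 1 = - Real.log (m + 1) + Real.log (m' + 1) := by
    simp [hF, Real.log_one]
  have hFs : F s = δ * Real.log s - Real.log (m * s + 1) + Real.log (m' + s) := rfl
  rw [hF1, hFs] at h1
  linarith

end HilbertAux

open HilbertAux

/-- If an open subcone `C' ⊆ C` has diameter at most `Mb` for the Hilbert metric of `C`,
then the inclusion `C' ↪ C` is a uniform `δ(Mb)`-contraction of the Hilbert metrics, with
`δ(Mb) < 1` depending only on `Mb` (and the dimension). -/
theorem hilbert_metric_uniform_contraction (n : ℕ) (Mb : ℝ) :
    ∃ δ : ℝ, δ < 1 ∧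
      ∀ C C' : Set (Fin n → ℝ),
        IsOpen C → Convex ℝ C → IsCone C → C.Nonempty →
        (∀ x : Fin n → ℝ, x ≠ 0 → x ∈ closure C → -x ∈ closure C → False) →
        IsOpen C' → Convex ℝ C' → IsCone C' → C' ⊆ C →
        (∀ x ∈ C', ∀ y ∈ C', coneDist C x y ≤ Mb) →
        ∀ x ∈ C', ∀ y ∈ C', coneDist C x y ≤ δ * coneDist C' x y := by
  classical
  set Δ : ℝ := max Mb 0 with hΔdef
  have hΔ0 : 0 ≤ Δ := le_max_right _ _
  set E : ℝ := Real.exp (Δ / 2) with hEdef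
  have hE1 : 1 ≤ E := Real.one_le_exp (by positivity)
  refine ⟨(E - 1) / (E + 1), by rw [div_lt_one (by linarith)]; linarith, ?_⟩
  intro C C' hO hconv hcone hne hpoint hO' hconv' hcone' hsub hdiam x hx y hy
  set δ : ℝ := (E - 1) / (E + 1) with hδdef
  have hδ0 : 0 ≤ δ := div_nonneg (by linarith) (by linarith)
  rcases Nat.eq_zero_or_pos n with hn | hn
  · subst hn
    have hx0 : x = 0 := funext fun i => absurd i.2 (Nat.not_lt_zero _)
    have hy0 : y = 0 := funext fun i => absurd i.2 (Nat.not_lt_zero _)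
    have hg : ∀ D : Set (Fin 0 → ℝ), (0 : Fin 0 → ℝ) ∈ D → coneDist D 0 0 = 0 := by
      intro D hD
      have hset : {t : ℝ | 0 < t ∧ t • (0 : Fin 0 → ℝ) - 0 ∈ closure D} = Set.Ioi 0 := by
        ext t
        simp only [Set.mem_setOf_eq, smul_zero, sub_zero, Set.mem_Ioi]
        exact and_iff_left (subset_closure hD)
      have hgd : gaugeM D 0 0 = 0 := by rw [gaugeM, hset]; exact csInf_Ioi
      rw [coneDist, hgd, zero_mul, Real.log_zero]
    have h0C : (0 : Fin 0 → ℝ) ∈ C := by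
      obtain ⟨z, hz⟩ := hne
      rwa [show z = (0 : Fin 0 → ℝ) from funext fun i => absurd i.2 (Nat.not_lt_zero _)] at hz
    have h0C' : (0 : Fin 0 → ℝ) ∈ C' := hx0 ▸ hx
    rw [hx0, hy0, hg C h0C, hg C' h0C']
    simp
  · have h0C : (0 : Fin n → ℝ) ∉ C := by
      intro h0
      obtain ⟨r, hr, hball⟩ := Metric.isOpen_iff.mp hO 0 h0
      set v : Fin n → ℝ := fun _ => r / 2 with hv
      have hvmem : ∀ w : Fin n → ℝ, ‖w‖ ≤ r / 2 → w ∈ C := fun w hw =>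
        hball (by rw [Metric.mem_ball, dist_zero_right]; linarith)
      have hnv : ‖v‖ ≤ r / 2 := by
        apply (pi_norm_le_iff_of_nonneg (by positivity)).mpr
        intro i
        rw [hv, Real.norm_eq_abs, abs_of_pos (by positivity)]
      have hnnv : ‖-v‖ ≤ r / 2 := by rwa [norm_neg]
      have hv0 : v ≠ 0 := by
        intro h
        have h2 := congrFun h ⟨0, hn⟩
        simp only [hv, Pi.zero_apply] at h2
        linarith
      exact hpoint v hv0 (subset_closure (hvmem v hnv)) (subset_closure (hvmem _ hnnv))
    have hxC : x ∈ C := hsub hx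
    have hyC : y ∈ C := hsub hy
    have hx0 : x ≠ 0 := fun h => h0C (h ▸ hxC)
    have hy0 : y ≠ 0 := fun h => h0C (h ▸ hyC)
    have h0C' : (0 : Fin n → ℝ) ∉ C' := fun h => h0C (hsub h)
    have hpoint' : ∀ z : Fin n → ℝ, z ≠ 0 → z ∈ closure C' → -z ∈ closure C' → False :=
      fun z hz h1 h2 => hpoint z hz (closure_mono hsub h1) (closure_mono hsub h2)
    obtain ⟨hβ, hβm⟩ := gauge_spec hO' hcone' hpoint' hx hy hy0
    obtain ⟨hγ, hγm⟩ := gauge_spec hO' hcone' hpoint' hy hx hx0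
    set β := gaugeM C' x y with hβdef
    set γ := gaugeM C' y x with hγdef
    have hβγ : 1 ≤ β * γ := one_le_gauge_mul hO' hconv' hcone' hpoint' hx hy hx0 hy0
    have main : ∀ ε : ℝ, 0 < ε → coneDist C x y ≤ δ * Real.log ((β + ε) * (γ + ε)) := by
      intro ε hεpos
      set a : ℝ := (γ + ε)⁻¹ with hadef
      set b : ℝ := β + ε with hbdef
      have ha0 : 0 < a := by rw [hadef]; positivity
      have hb0 : 0 < b := by rw [hbdef]; positivity
      have hpmem : y - a • x ∈ C' := by
        have h1 : a • (γ • y - x) ∈ closure C' := closure_smul_mem hcone' hγm ha0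
        have haγ : a * γ < 1 := by
          rw [hadef, inv_mul_lt_iff₀ (by positivity)]
          linarith
        have h2 : (1 - a * γ) • y ∈ C' := hcone' y hy _ (by linarith)
        have h3 := add_mem_of_closure hO' hconv' hcone' h1 h2
        convert h3 using 1
        module
      have hqmem : b • x - y ∈ C' := by
        have h2 : ε • x ∈ C' := hcone' x hx ε hεpos
        have h3 := add_mem_of_closure hO' hconv' hcone' hβm h2
        convert h3 using 1
        rw [hbdef]
        module
      set p : Fin n → ℝ := y - a • x with hpdef
      set q : Fin n → ℝ := b • x - y with hqdef
      have hpC : p ∈ C := hsub hpmem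
      have hqC : q ∈ C := hsub hqmem
      have hp0 : p ≠ 0 := fun h => h0C (h ▸ hpC)
      have hq0 : q ≠ 0 := fun h => h0C (h ▸ hqC)
      obtain ⟨hm, hmm⟩ := gauge_spec hO hcone hpoint hqC hpC hp0
      obtain ⟨hm', hm'm⟩ := gauge_spec hO hcone hpoint hpC hqC hq0
      set m := gaugeM C q p with hmdef
      set m' := gaugeM C p q with hm'def
      have hdi : Real.log (m' * m) ≤ Δ := le_trans (hdiam p hpmem q hqmem) (le_max_left _ _)
      have hmmE : m * m' ≤ E ^ 2 := by
        have h1 : m * m' = Real.exp (Real.log (m' * m)) := by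
          rw [Real.exp_log (by positivity), mul_comm]
        rw [h1, hEdef]
        calc Real.exp (Real.log (m' * m)) ≤ Real.exp Δ := Real.exp_le_exp.mpr hdi
          _ = Real.exp (Δ / 2) ^ 2 := by rw [sq, ← Real.exp_add]; ring_nf
      have h1 : ((m * b + a) / (m + 1)) • x - y ∈ closure C := by
        have h2 := closure_smul_mem hcone hmm (t := (m + 1)⁻¹) (by positivity)
        convert h2 using 1
        rw [hqdef, hpdef]
        match_scalars <;> field_simp <;> ring
      have hgxy : gaugeM C x y ≤ (m * b + a) / (m + 1) :=
        gauge_le _ _ (by positivity) h1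
      have h2 : ((m' + 1) / (m' * a + b)) • y - x ∈ closure C := by
        have h3 := closure_smul_mem hcone hm'm (t := (m' * a + b)⁻¹) (by positivity)
        convert h3 using 1
        rw [hqdef, hpdef]
        match_scalars <;> field_simp <;> ring
      have hgyx : gaugeM C y x ≤ (m' + 1) / (m' * a + b) :=
        gauge_le _ _ (by positivity) h2
      obtain ⟨hgx, _⟩ := gauge_spec hO hcone hpoint hxC hyC hy0
      obtain ⟨hgy, _⟩ := gauge_spec hO hcone hpoint hyC hxC hx0
      set s : ℝ := b * (γ + ε) with hsdef
      have hs1 : 1 ≤ s := by rw [hsdef, hbdef]; nlinarith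
      have hsa : a * s = b := by
        rw [hsdef, hadef]
        field_simp
      have hcore := core_log_ineq δ m m' s hm hm' hδ0 hs1
        (fun u hu => hδdef ▸ key_ineq E m m' hE1 hm hm' hmmE u hu)
      have hfin : Real.log (gaugeM C x y * gaugeM C y x)
          ≤ Real.log (((m * b + a) / (m + 1)) * ((m' + 1) / (m' * a + b))) := by
        apply Real.log_le_log (by positivity)
        exact mul_le_mul hgxy hgyx hgy.le (by positivity)
      have hprod : ((m * b + a) / (m + 1)) * ((m' + 1) / (m' * a + b))
          = ((m * s + 1) * (m' + 1)) / ((m + 1) * (m' + s)) := by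
        rw [← hsa]
        have ha' : a ≠ 0 := ha0.ne'
        field_simp
      have hs0 : (0:ℝ) < s := lt_of_lt_of_le one_pos hs1
      have hlogeq : Real.log (((m * s + 1) * (m' + 1)) / ((m + 1) * (m' + s)))
          = Real.log (m * s + 1) + Real.log (m' + 1)
            - (Real.log (m + 1) + Real.log (m' + s)) := by
        rw [Real.log_div (by positivity) (by positivity),
          Real.log_mul (by positivity) (by positivity),
          Real.log_mul (by positivity) (by positivity)]
      have hseq : s = (β + ε) * (γ + ε) := by rw [hsdef, hbdef]
      calc coneDist C x y = Real.log (gaugeM C x y * gaugeM C y x) := rfl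
        _ ≤ Real.log (((m * b + a) / (m + 1)) * ((m' + 1) / (m' * a + b))) := hfin
        _ = Real.log (((m * s + 1) * (m' + 1)) / ((m + 1) * (m' + s))) := by rw [hprod]
        _ = Real.log (m * s + 1) + Real.log (m' + 1)
            - (Real.log (m + 1) + Real.log (m' + s)) := hlogeq
        _ ≤ δ * Real.log s := by linarith
        _ = δ * Real.log ((β + ε) * (γ + ε)) := by rw [hseq]
    have hcd' : coneDist C' x y = Real.log (β * γ) := rfl
    rw [hcd']
    have hβγpos : (0:ℝ) < β * γ := by positivity
    have htend : Tendsto (fun ε : ℝ => δ * Real.log ((β + ε) * (γ + ε))) (𝓝[>] 0)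
        (𝓝 (δ * Real.log (β * γ))) := by
      have t1 : Tendsto (fun ε : ℝ => (β + ε) * (γ + ε)) (𝓝 0) (𝓝 (β * γ)) := by
        have hco : Continuous fun ε : ℝ => (β + ε) * (γ + ε) := by fun_prop
        simpa using hco.tendsto 0
      have t2 : Tendsto Real.log (𝓝 (β * γ)) (𝓝 (Real.log (β * γ))) :=
        Real.continuousAt_log hβγpos.ne'
      exact ((t2.comp t1).const_mul δ).mono_left nhdsWithin_le_nhds
    refine ge_of_tendsto htend ?_
    filter_upwards [self_mem_nhdsWithin] with ε hε
    exact main ε hε
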